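/- arXiv:2505.05539 — 8 statements merged into one kernel-verified Lean document; each statement's English description precedes it below -/
import Mathlib

section
/- The Nullstellensatzian objects of the category of commutative rings are precisely the algebraically closed fields: a commutative ring k is Nullstellensatzian (i.e., k is not the zero ring and every finitely presented nonzero k-algebra admits a k-algebra homomorphism to k) if and only if k is an algebraically closed field. -/
/-- A commutative ring is Nullstellensatzian (nonzero, and every finitely presented
nonzero algebra over it admits an algebra map back) iff it is an algebraically
closed field. -/
theorem stmt6 (k : Type) [CommRing k] :
    (Nontrivial k ∧ ∀ (A : Type) [CommRing A] [Algebra k A],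
        Algebra.FinitePresentation k A → Nontrivial A → Nonempty (A →ₐ[k] k)) ↔
      (IsField k ∧ ∀ p : Polynomial k, 0 < p.degree → ∃ x, Polynomial.IsRoot p x) := by
  constructor
  · rintro ⟨h1, h2⟩
    have hfield : IsField k := by
      refine ⟨h1.exists_pair_ne, mul_comm, ?_⟩
      intro a ha
      by_contra hua
      have hnotunit : ¬ IsUnit a := fun h => hua ⟨↑h.unit⁻¹, h.unit.mul_inv⟩
      have hspan : Ideal.span {a} ≠ (⊤ : Ideal k) := by
        simpa [Ideal.span_singleton_eq_top] using hnotunit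
      haveI : Nontrivial (k ⧸ Ideal.span {a}) := Ideal.Quotient.nontrivial_iff.mpr hspan
      have hfp : Algebra.FinitePresentation k (k ⧸ Ideal.span {a}) :=
        Algebra.FinitePresentation.quotient (Submodule.fg_span_singleton a)
      obtain ⟨φ⟩ := h2 (k ⧸ Ideal.span {a}) hfp inferInstance
      have : a = φ (Ideal.Quotient.mk (Ideal.span {a}) a) := by
        have := φ.commutes a
        simpa using this.symm
      rw [Ideal.Quotient.eq_zero_iff_mem.mpr (Ideal.mem_span_singleton_self a),
        map_zero] at this
      exact ha this
    refine ⟨hfield, ?_⟩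
    intro p hp
    letI : Field k := hfield.toField
    have hnotunit : ¬ IsUnit p := by
      rw [Polynomial.isUnit_iff_degree_eq_zero]
      exact fun h => by simp [h] at hp
    have hspan : Ideal.span {p} ≠ (⊤ : Ideal (Polynomial k)) := by
      simpa [Ideal.span_singleton_eq_top] using hnotunit
    haveI : Nontrivial (Polynomial k ⧸ Ideal.span {p}) := Ideal.Quotient.nontrivial_iff.mpr hspan
    have hfp : Algebra.FinitePresentation k (Polynomial k ⧸ Ideal.span {p}) :=
      Algebra.FinitePresentation.quotient (Submodule.fg_span_singleton p)
    obtain ⟨φ⟩ := h2 (Polynomial k ⧸ Ideal.span {p}) hfp inferInstance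
    refine ⟨φ (Ideal.Quotient.mk _ Polynomial.X), ?_⟩
    have key : ∀ q : Polynomial k,
        Polynomial.eval (φ (Ideal.Quotient.mk _ Polynomial.X)) q
          = φ (Ideal.Quotient.mk _ q) := by
      intro q
      induction q using Polynomial.induction_on with
      | C c =>
        simp only [Polynomial.eval_C]
        exact (φ.commutes c).symm
      | add q r hq hr => simp [hq, hr]
      | monomial n c h => simp_all [pow_succ, ← mul_assoc]
    have : Polynomial.eval (φ (Ideal.Quotient.mk _ Polynomial.X)) p = 0 := by
      rw [key p, Ideal.Quotient.eq_zero_iff_mem.mpr (Ideal.mem_span_singleton_self p),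
        map_zero]
    exact this
  · rintro ⟨hfield, hroots⟩
    letI : Field k := hfield.toField
    haveI : IsAlgClosed k := IsAlgClosed.of_exists_root k (fun p _ hirr =>
      hroots p (Polynomial.degree_pos_of_irreducible hirr))
    refine ⟨inferInstance, ?_⟩
    intro A _ _ hfp hA
    obtain ⟨m, hm⟩ := Ideal.exists_maximal A
    letI := Ideal.Quotient.field m
    haveI : Algebra.FinitePresentation k A := hfp
    haveI : Algebra.FiniteType k A := Algebra.FiniteType.of_finitePresentation
    haveI : Algebra.FiniteType k (A ⧸ m) :=
      Algebra.FiniteType.trans ‹Algebra.FiniteType k A› inferInstance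
    haveI : Module.Finite k (A ⧸ m) := finite_of_finite_type_of_isJacobsonRing k (A ⧸ m)
    haveI : Algebra.IsIntegral k (A ⧸ m) := Algebra.IsIntegral.of_finite k (A ⧸ m)
    have hsurj : Function.Surjective (algebraMap k (A ⧸ m)) :=
      IsAlgClosed.algebraMap_bijective_of_isIntegral.2
    have hinj : Function.Injective (algebraMap k (A ⧸ m)) :=
      (algebraMap k (A ⧸ m)).injective
    let e : k ≃ₐ[k] (A ⧸ m) := AlgEquiv.ofBijective (Algebra.ofId k (A ⧸ m)) ⟨hinj, hsurj⟩
    exact ⟨e.symm.toAlgHom.comp (Ideal.Quotient.mkₐ k m)⟩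
end

section
/- Let G be a finite group, k a commutative ring, and A a commutative ring with G-action equipped with a G-equivariant ring homomorphism α : Fun(G,k) → A, where Fun(G,k) carries the G-action (g·φ)(h) = φ(hg). Let δ_g ∈ Fun(G,k) denote the indicator function of g, and set A₀ = A·α(δ_e). Then the idempotents α(δ_g) form a complete orthogonal family, and A is isomorphic as a G-ring over Fun(G,k) to Fun(G, A₀); in particular, if A₀ = 0 then A = 0. -/
set_option linter.unusedSectionVars false


open Finset

/-- The indicator function of a group element. -/
def delta (G k : Type) [DecidableEq G] [One k] [Zero k] (g : G) : G → k :=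
  fun h => if h = g then 1 else 0

section aux
variable (G : Type) [Group G] [Fintype G] [DecidableEq G] (k A : Type)
    [CommRing k] [CommRing A] [MulSemiringAction G A] (α : (G → k) →+* A)

theorem aux_idem (g : G) : α (delta G k g) * α (delta G k g) = α (delta G k g) := by
  rw [← map_mul]
  congr 1
  funext x
  simp only [Pi.mul_apply, delta]
  split_ifs <;> simp

theorem aux_orth {g h : G} (hgh : g ≠ h) : α (delta G k g) * α (delta G k h) = 0 := by
  rw [← map_mul]
  have : delta G k g * delta G k h = 0 := by
    funext x
    simp only [Pi.mul_apply, delta, Pi.zero_apply]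
    split_ifs with h1 h2 <;> simp_all
  rw [this, map_zero]

theorem aux_sum : (∑ g : G, α (delta G k g)) = 1 := by
  rw [← map_sum]
  have : (∑ g : G, delta G k g) = 1 := by
    funext x
    simp [delta, Finset.sum_apply]
  rw [this, map_one]

theorem aux_mk_eone :
    Ideal.Quotient.mk (Ideal.span {1 - α (delta G k 1)}) (α (delta G k 1)) = 1 := by
  have h0 : Ideal.Quotient.mk (Ideal.span {1 - α (delta G k 1)}) (1 - α (delta G k 1)) = 0 := by
    rw [Ideal.Quotient.eq_zero_iff_mem]
    exact Ideal.mem_span_singleton_self _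
  have := map_sub (Ideal.Quotient.mk (Ideal.span {1 - α (delta G k 1)})) 1 (α (delta G k 1))
  rw [this, map_one, sub_eq_zero] at h0
  exact h0.symm

theorem aux_mk_mul {τ : G} (hτ : τ ≠ 1) (x : A) :
    Ideal.Quotient.mk (Ideal.span {1 - α (delta G k 1)}) (x * α (delta G k τ)) = 0 := by
  have : Ideal.Quotient.mk (Ideal.span {1 - α (delta G k 1)}) (x * α (delta G k τ))
      = Ideal.Quotient.mk _ (x * α (delta G k τ)) * Ideal.Quotient.mk _ (α (delta G k 1)) := by
    rw [aux_mk_eone G k A α, mul_one]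
  rw [this, ← map_mul, mul_assoc, aux_orth G k A α hτ, mul_zero, map_zero]

variable (hα : ∀ (g : G) (φ : G → k), α (fun h => φ (h * g)) = g • α φ)
include hα

theorem aux_equiv (σ h : G) : σ • α (delta G k h) = α (delta G k (h * σ⁻¹)) := by
  rw [← hα σ (delta G k h)]
  congr 1
  funext x
  simp only [delta]
  congr 1
  simp [eq_comm, eq_mul_inv_iff_mul_eq]

end aux

/-- For a G-equivariant ring map α : Fun(G,k) → A, the images of the indicator
idempotents form a complete orthogonal family, and A is isomorphic, as a G-ring
over Fun(G,k), to Fun(G, A₀) where A₀ = A·α(δ_e) (realized as the quotient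
A ⧸ (1 - α(δ_e))); in particular if A₀ = 0 then A = 0. -/
theorem stmt8 (G : Type) [Group G] [Fintype G] [DecidableEq G] (k A : Type)
    [CommRing k] [CommRing A] [MulSemiringAction G A] (α : (G → k) →+* A)
    (hα : ∀ (g : G) (φ : G → k), α (fun h => φ (h * g)) = g • α φ) :
    (∀ g : G, α (delta G k g) * α (delta G k g) = α (delta G k g)) ∧
    (∀ g h : G, g ≠ h → α (delta G k g) * α (delta G k h) = 0) ∧
    (∑ g : G, α (delta G k g)) = 1 ∧
    (∃ e : A ≃+* (G → A ⧸ Ideal.span {1 - α (delta G k 1)}),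
      (∀ (g : G) (a : A), e (g • a) = fun h => e a (h * g)) ∧
      (∀ (φ : G → k) (h : G),
        e (α φ) h = Ideal.Quotient.mk (Ideal.span {1 - α (delta G k 1)})
          (α (fun x => φ (x * h))))) ∧
    (Subsingleton (A ⧸ Ideal.span {1 - α (delta G k 1)}) → Subsingleton A) := by
  set I : Ideal A := Ideal.span {1 - α (delta G k 1)} with hI
  set mk : A →+* A ⧸ I := Ideal.Quotient.mk I with hmk
  -- ring hom F
  set F : A →+* (G → A ⧸ I) :=
    { toFun := fun a h => mk (h • a)
      map_one' := by funext h; simp [smul_eq_mul] -- h • (1:A)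
      map_mul' := by intro a b; funext h; simp [smul_mul', map_mul]
      map_zero' := by funext h; simp
      map_add' := by intro a b; funext h; simp [smul_add, map_add] } with hF
  have hFapp : ∀ (a : A) (h : G), F a h = mk (h • a) := fun _ _ => rfl
  -- injectivity
  have hinj : Function.Injective F := by
    rw [injective_iff_map_eq_zero]
    intro a ha
    have key : ∀ h : G, a * α (delta G k h) = 0 := by
      intro h
      have h1 : mk (h • a) = 0 := congrFun ha h
      rw [hmk, Ideal.Quotient.eq_zero_iff_mem, hI, Ideal.mem_span_singleton] at h1
      obtain ⟨c, hc⟩ := h1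
      have h2 : (h • a) * α (delta G k 1) = 0 := by
        rw [hc, mul_comm (1 - α (delta G k 1)) c, mul_assoc, sub_mul, one_mul,
          aux_idem G k A α 1, sub_self, mul_zero]
      have h3 := congrArg (fun x => h⁻¹ • x) h2
      simp only [smul_mul', smul_zero, inv_smul_smul] at h3
      rwa [aux_equiv G k A α hα h⁻¹ 1, one_mul, inv_inv] at h3
    have : a = a * ∑ g : G, α (delta G k g) := by rw [aux_sum G k A α, mul_one]
    rw [Finset.mul_sum] at this
    simp only [key, Finset.sum_const_zero] at this
    exact this
  -- surjectivity
  have hsurj : Function.Surjective F := by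
    intro f
    have hout : ∀ g : G, ∃ a : A, mk a = f g := fun g => Ideal.Quotient.mk_surjective (f g)
    choose rep hrep using hout
    refine ⟨∑ g : G, g⁻¹ • (rep g * α (delta G k 1)), ?_⟩
    funext h
    rw [hFapp, Finset.smul_sum, map_sum]
    have hterm : ∀ g : G, mk (h • g⁻¹ • (rep g * α (delta G k 1)))
        = if g = h then f h else 0 := by
      intro g
      rw [smul_smul, smul_mul', aux_equiv G k A α hα (h * g⁻¹) 1, one_mul]
      by_cases hg : g = h
      · subst hg
        simp only [mul_inv_cancel, inv_one, if_true]
        rw [one_smul, map_mul, aux_mk_eone G k A α, mul_one, hrep]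
      · rw [if_neg hg]
        have hne : (h * g⁻¹)⁻¹ ≠ 1 := by
          simp only [ne_eq, inv_eq_one, mul_inv_eq_one]
          exact fun e => hg (e.symm)
        exact aux_mk_mul G k A α hne _
    rw [Finset.sum_congr rfl (fun g _ => hterm g)]
    simp
  refine ⟨aux_idem G k A α, fun g h hgh => aux_orth G k A α hgh, aux_sum G k A α, ?_, ?_⟩
  · refine ⟨RingEquiv.ofBijective F ⟨hinj, hsurj⟩, ?_, ?_⟩
    · intro g a
      funext h
      show F (g • a) h = F a (h * g)
      rw [hFapp, hFapp, smul_smul]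
    · intro φ h
      show F (α φ) h = mk (α fun x => φ (x * h))
      rw [hFapp, hα h φ]
  · intro hsub
    exact (RingEquiv.ofBijective F ⟨hinj, hsurj⟩).toEquiv.subsingleton
end

section
/- Let G be a finite group. If F is an algebraically closed field, then the G-ring Fun(G, F) is Nullstellensatzian in the category of commutative rings with G-action: it is nonzero, and every finitely presented nonzero Fun(G,F)-algebra in G-rings admits a G-equivariant algebra map to Fun(G,F). -/
lemma exists_char (F : Type) [Field F] [IsAlgClosed F] (B : Type) [CommRing B]
    [Algebra F B] [Algebra.FiniteType F B] [Nontrivial B] :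
    Nonempty (B →ₐ[F] F) := by
  obtain ⟨m, hm⟩ := Ideal.exists_maximal B
  letI := hm
  letI : Field (B ⧸ m) := Ideal.Quotient.field m
  haveI : Algebra.FiniteType F (B ⧸ m) :=
    Algebra.FiniteType.of_surjective (Ideal.Quotient.mkₐ F m)
      (Ideal.Quotient.mkₐ_surjective F m)
  haveI : Module.Finite F (B ⧸ m) := finite_of_finite_type_of_isJacobsonRing F (B ⧸ m)
  have hbij : Function.Bijective (algebraMap F (B ⧸ m)) :=
    ⟨(algebraMap F (B ⧸ m)).injective, IsAlgClosed.algebraMap_bijective_of_isIntegral.2⟩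
  let e : F ≃ₐ[F] (B ⧸ m) := AlgEquiv.ofBijective (Algebra.ofId F (B ⧸ m)) hbij
  exact ⟨e.symm.toAlgHom.comp (Ideal.Quotient.mkₐ F m)⟩

/-- For an algebraically closed field F and finite group G, the G-ring Fun(G,F)
(with action (g • φ) h = φ (h * g)) is Nullstellensatzian in G-rings: it is
nonzero, and every finitely presented nonzero Fun(G,F)-algebra in G-rings admits
a G-equivariant algebra map to Fun(G,F). -/
theorem stmt9 (G : Type) [Group G] [Fintype G] (F : Type) [Field F] [IsAlgClosed F] :
    Nontrivial (G → F) ∧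
    ∀ (A : Type) [CommRing A] [MulSemiringAction G A] [Algebra (G → F) A],
      (∀ (g : G) (φ : G → F),
        algebraMap (G → F) A (fun h => φ (h * g)) = g • algebraMap (G → F) A φ) →
      Algebra.FinitePresentation (G → F) A → Nontrivial A →
      ∃ f : A →ₐ[G → F] (G → F),
        ∀ (g : G) (a : A), f (g • a) = fun h => f a (h * g) := by
  classical
  refine ⟨inferInstance, ?_⟩
  intro A _ _ _ heq hfp hA
  set e1 : G → F := Pi.single (1 : G) (1 : F) with he1
  set ε : A := algebraMap (G → F) A e1 with hε
  have he1sq : e1 * e1 = e1 := by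
    funext k
    by_cases hk : k = 1 <;> simp [he1, Pi.single_apply, hk]
  have hεidem : ε * ε = ε := by rw [hε, ← map_mul, he1sq]
  have hsingles : ∀ g : G, algebraMap (G → F) A (Pi.single g (1 : F)) = g⁻¹ • ε := by
    intro g
    have h1 : (fun h => e1 (h * g⁻¹)) = Pi.single g (1 : F) := by
      funext h
      by_cases hh : h = g <;> simp [he1, Pi.single_apply, hh, mul_inv_eq_one]
    rw [← h1]; exact heq g⁻¹ e1
  have hε0 : ε ≠ 0 := by
    intro h0
    have hsum : (∑ g : G, Pi.single g (1 : F)) = (1 : G → F) := Finset.univ_sum_single _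
    have : (1 : A) = 0 := by
      calc (1 : A) = algebraMap (G → F) A 1 := (map_one _).symm
        _ = ∑ g : G, algebraMap (G → F) A (Pi.single g (1 : F)) := by
              rw [← hsum, map_sum]
        _ = ∑ g : G, g⁻¹ • ε := by simp_rw [hsingles]
        _ = 0 := by simp [h0]
    exact one_ne_zero this
  set I : Ideal A := Ideal.span {1 - ε} with hI
  have hInetop : I ≠ ⊤ := by
    intro ht
    have h1 : (1 : A) ∈ I := ht ▸ Submodule.mem_top
    rw [hI, Ideal.mem_span_singleton'] at h1
    obtain ⟨a, ha⟩ := h1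
    apply hε0
    have h2 : ε = a * (1 - ε) * ε := by rw [ha, one_mul]
    rwa [mul_assoc, sub_mul, one_mul, hεidem, sub_self, mul_zero] at h2
  letI : Algebra F A := ((algebraMap (G → F) A).comp (algebraMap F (G → F))).toAlgebra
  haveI : IsScalarTower F (G → F) A := IsScalarTower.of_algebraMap_eq' rfl
  haveI hBnt : Nontrivial (A ⧸ I) := Ideal.Quotient.nontrivial_iff.mpr hInetop
  haveI := hfp
  haveI : Algebra.FiniteType (G → F) A := Algebra.FiniteType.of_finitePresentation
  haveI : Algebra.FiniteType F A := Algebra.FiniteType.trans inferInstance ‹_›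
  haveI : Algebra.FiniteType F (A ⧸ I) :=
    Algebra.FiniteType.of_surjective (Ideal.Quotient.mkₐ F I)
      (Ideal.Quotient.mkₐ_surjective F I)
  obtain ⟨χ⟩ := exists_char F (A ⧸ I)
  set π : A →ₐ[F] (A ⧸ I) := Ideal.Quotient.mkₐ F I with hπ
  have hπε : π ε = 1 := by
    have hmem : (1 : A) - ε ∈ I := Ideal.subset_span rfl
    have h0 : π 1 - π ε = 0 := by
      rw [← map_sub]; exact Ideal.Quotient.eq_zero_iff_mem.2 hmem
    have := sub_eq_zero.mp h0
    rw [map_one] at this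
    exact this.symm
  have halgF : ∀ c : F, algebraMap F A c = algebraMap (G → F) A (algebraMap F (G → F) c) :=
    fun c => rfl
  have hkey : ∀ ψ : G → F, χ (π (algebraMap (G → F) A ψ)) = ψ 1 := by
    intro ψ
    have hfun : ψ - (algebraMap F (G → F) (ψ 1)) * e1 = ψ * (1 - e1) := by
      funext k
      by_cases hk : k = 1 <;>
        simp [he1, Pi.single_apply, hk, Algebra.algebraMap_eq_smul_one, mul_sub]
    have hmem : algebraMap (G → F) A ψ - algebraMap F A (ψ 1) * ε ∈ I := by
      rw [halgF, ← map_mul, ← map_sub, hfun, map_mul]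
      refine Ideal.mul_mem_left _ _ ?_
      rw [map_sub, map_one]
      exact Ideal.subset_span rfl
    have h0 : π (algebraMap (G → F) A ψ) - π (algebraMap F A (ψ 1) * ε) = 0 := by
      rw [← map_sub]; exact Ideal.Quotient.eq_zero_iff_mem.2 hmem
    have h1 : π (algebraMap (G → F) A ψ) = π (algebraMap F A (ψ 1) * ε) := sub_eq_zero.mp h0
    rw [h1, map_mul, hπε, mul_one, π.commutes, χ.commutes]; simp
  let f0 : A →+* (G → F) :=
    { toFun := fun a => fun h => χ (π (h • a))
      map_one' := by funext h; show χ (π (h • (1 : A))) = 1; rw [smul_one, map_one, map_one]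
      map_mul' := fun a b => by
        funext h
        show χ (π (h • (a * b))) = χ (π (h • a)) * χ (π (h • b))
        rw [smul_mul', map_mul, map_mul]
      map_zero' := by funext h; show χ (π (h • (0 : A))) = 0; rw [smul_zero, map_zero, map_zero]
      map_add' := fun a b => by
        funext h
        show χ (π (h • (a + b))) = χ (π (h • a)) + χ (π (h • b))
        rw [smul_add, map_add, map_add] }
  let f : A →ₐ[G → F] (G → F) :=
    { f0 with
      commutes' := fun φ => by
        funext h
        show χ (π (h • algebraMap (G → F) A φ)) = φ h
        rw [← heq h φ, hkey]
        simp }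
  refine ⟨f, fun g a => ?_⟩
  funext h
  show χ (π (h • (g • a))) = χ (π ((h * g) • a))
  rw [smul_smul]
end

section
/- Let G be a finite group. A commutative ring with G-action k is Nullstellensatzian in the category of G-rings if and only if k is G-equivariantly isomorphic to Fun(G, F) for some algebraically closed field F, where Fun(G,F) has G-action (g·φ)(h) = φ(hg). -/
/-- type synonym for `G → k` carrying the translation action of `G` -/
def Fn (G k : Type) : Type := G → k

namespace Fn

variable {G k : Type} [Group G] [CommRing k]

instance : CommRing (Fn G k) := inferInstanceAs (CommRing (G → k))

instance [Nontrivial k] : Nontrivial (Fn G k) := inferInstanceAs (Nontrivial (G → k))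

/-- interpret a function as an element of `Fn G k` -/
def mk (φ : G → k) : Fn G k := φ

/-- evaluate an element of `Fn G k` -/
def ev (φ : Fn G k) : G → k := φ

@[simp] theorem ev_mk (φ : G → k) : ev (mk φ) = φ := rfl

theorem mk_ev (φ : Fn G k) : mk (ev φ) = φ := rfl

@[simp] theorem ev_mul (φ ψ : Fn G k) : ev (φ * ψ) = ev φ * ev ψ := rfl
@[simp] theorem ev_add (φ ψ : Fn G k) : ev (φ + ψ) = ev φ + ev ψ := rfl
@[simp] theorem ev_one : ev (1 : Fn G k) = 1 := rfl
@[simp] theorem ev_zero : ev (0 : Fn G k) = 0 := rfl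

theorem ext {φ ψ : Fn G k} (h : ∀ x, ev φ x = ev ψ x) : φ = ψ := funext h

/-- `mk` as a ring isomorphism -/
def mkRingEquiv : (G → k) ≃+* Fn G k :=
  { toFun := mk, invFun := ev, left_inv := fun _ => rfl, right_inv := fun _ => rfl,
    map_mul' := fun _ _ => rfl, map_add' := fun _ _ => rfl }

instance : MulSemiringAction G (Fn G k) where
  smul g φ := mk fun h => ev φ (h * g)
  one_smul φ := funext fun h => by show ev φ (h * 1) = ev φ h; rw [mul_one]
  mul_smul g₁ g₂ φ := funext fun h => by
    show ev φ (h * (g₁ * g₂)) = ev φ (h * g₁ * g₂); rw [mul_assoc]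
  smul_zero g := rfl
  smul_add g x y := rfl
  smul_one g := rfl
  smul_mul g x y := rfl

@[simp] theorem ev_smul (g : G) (φ : Fn G k) (h : G) : ev (g • φ) h = ev φ (h * g) := rfl

end Fn

section QuotAction
variable {G k : Type} [Group G] [CommRing k] [MulSemiringAction G k]

/-- quotient action on k ⧸ I for a G-stable ideal I -/
def quotAction (I : Ideal k) (hI : ∀ (g : G) (x : k), x ∈ I → g • x ∈ I) :
    MulSemiringAction G (k ⧸ I) where
  smul g := Ideal.quotientMap I (MulSemiringAction.toRingHom G k g)
    (show I ≤ Ideal.comap (MulSemiringAction.toRingHom G k g) I from fun x hx => hI g x hx)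
  one_smul x := by
    obtain ⟨y, rfl⟩ := Ideal.Quotient.mk_surjective x
    show Ideal.quotientMap _ _ _ _ = _
    rw [Ideal.quotientMap_mk]
    simp
  mul_smul g₁ g₂ x := by
    obtain ⟨y, rfl⟩ := Ideal.Quotient.mk_surjective x
    show Ideal.quotientMap _ _ _ _ = Ideal.quotientMap _ _ _ (Ideal.quotientMap _ _ _ _)
    rw [Ideal.quotientMap_mk, Ideal.quotientMap_mk, Ideal.quotientMap_mk]
    simp [mul_smul]
  smul_zero g := by
    show Ideal.quotientMap _ _ _ 0 = 0
    simp
  smul_add g x y := by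
    obtain ⟨x, rfl⟩ := Ideal.Quotient.mk_surjective x
    obtain ⟨y, rfl⟩ := Ideal.Quotient.mk_surjective y
    show Ideal.quotientMap _ _ _ _ = Ideal.quotientMap _ _ _ _ + Ideal.quotientMap _ _ _ _
    simp only [map_add]
  smul_one g := by
    show Ideal.quotientMap _ _ _ 1 = 1
    simp
  smul_mul g x y := by
    obtain ⟨x, rfl⟩ := Ideal.Quotient.mk_surjective x
    obtain ⟨y, rfl⟩ := Ideal.Quotient.mk_surjective y
    show Ideal.quotientMap _ _ _ _ = Ideal.quotientMap _ _ _ _ * Ideal.quotientMap _ _ _ _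
    simp only [map_mul]

theorem quotAction_mk (I : Ideal k) (hI : ∀ (g : G) (x : k), x ∈ I → g • x ∈ I) (g : G) (x : k) :
    letI := quotAction I hI
    g • (Ideal.Quotient.mk I x) = Ideal.Quotient.mk I (g • x) :=
  Ideal.quotientMap_mk

end QuotAction
section FPPi
variable (G k : Type) [Group G] [Fintype G] [CommRing k]

open MvPolynomial

/-- the standard product algebra k^G is finitely presented -/
theorem fp_pi_std : Algebra.FinitePresentation k (G → k) := by
  classical
  rw [Algebra.FinitePresentation.iff_quotient_mvPolynomial']
  set ψ : MvPolynomial G k →ₐ[k] (G → k) := aeval (fun g : G => (Pi.single g 1 : G → k)) with hψ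
  have hψC : ∀ (c : k) (g : G), ψ (C c) g = c := by
    intro c g
    rw [hψ, aeval_C]
    rfl
  have hψX : ∀ (a : G), ψ (X a) = Pi.single a 1 := by
    intro a
    rw [hψ, aeval_X]
  have hsurj : Function.Surjective ψ := by
    intro φ
    refine ⟨∑ g : G, C (φ g) * X g, ?_⟩
    rw [map_sum]
    have h1 : ∀ g : G, ψ (C (φ g) * X g) = Pi.single g (φ g) := by
      intro g
      funext x
      rw [map_mul, Pi.mul_apply, hψC, hψX]
      simp [Pi.single_apply, mul_ite]
    rw [Finset.sum_congr rfl (fun g _ => h1 g)]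
    exact Finset.univ_sum_single φ
  set Jgen : Set (MvPolynomial G k) :=
    ((fun p : G × G => X p.1 * X p.2) '' {p : G × G | p.1 ≠ p.2}) ∪ {(∑ g : G, X g) - 1}
    with hJgen
  set J : Ideal (MvPolynomial G k) := Ideal.span Jgen with hJ
  have hXX : ∀ (a b : G), a ≠ b → X a * X b ∈ J := fun a b hab =>
    Ideal.subset_span (Or.inl ⟨(a, b), hab, rfl⟩)
  have hsum1 : (∑ g : G, X g) - 1 ∈ J := Ideal.subset_span (Or.inr rfl)
  have hX2 : ∀ a : G, (X a : MvPolynomial G k) ^ 2 - X a ∈ J := by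
    intro a
    have hrw : (X a : MvPolynomial G k) ^ 2 - X a
        = X a * ((∑ g : G, X g) - 1) - ∑ g ∈ Finset.univ.erase a, X a * X g := by
      rw [mul_sub, mul_one, Finset.mul_sum, ← Finset.add_sum_erase _ _ (Finset.mem_univ a)]
      ring
    rw [hrw]
    exact sub_mem (Ideal.mul_mem_left _ _ hsum1)
      (Ideal.sum_mem _ fun g hg => hXX a g (Finset.ne_of_mem_erase hg).symm)
  have hkey : ∀ p : MvPolynomial G k, p - ∑ g : G, C (ψ p g) * X g ∈ J := by
    intro p
    induction p using MvPolynomial.induction_on with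
    | C c =>
      have h2 : (C c : MvPolynomial G k) * (∑ g : G, X g) = ∑ g : G, C c * X g :=
        Finset.mul_sum _ _ _
      have h3 : (C c : MvPolynomial G k) - ∑ g : G, C c * X g
          = (- C c) * ((∑ g : G, X g) - 1) := by
        rw [neg_mul, mul_sub, mul_one, h2]
        ring
      simp only [hψC]
      rw [h3]
      exact Ideal.mul_mem_left _ _ hsum1
    | add p q hp hq =>
      have hrw : (p + q) - ∑ g : G, C (ψ (p + q) g) * X g
          = (p - ∑ g : G, C (ψ p g) * X g) + (q - ∑ g : G, C (ψ q g) * X g) := by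
        simp only [map_add, Pi.add_apply, add_mul]
        rw [Finset.sum_add_distrib]
        ring
      rw [hrw]
      exact add_mem hp hq
    | mul_X p a hp =>
      have hψa : ∀ g : G, ψ (p * X a) g = if g = a then ψ p a else 0 := by
        intro g
        rw [map_mul, Pi.mul_apply, hψX, Pi.single_apply]
        split
        · rename_i h; subst h; rw [mul_one]
        · rw [mul_zero]
      have hsum' : ∑ g : G, C (ψ (p * X a) g) * X g = C (ψ p a) * X a := by
        have h0 : ∀ g : G, C (ψ (p * X a) g) * X g
            = if g = a then C (ψ p a) * X g else 0 := by
          intro g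
          rw [hψa g]
          split
          · rfl
          · rw [map_zero, zero_mul]
        rw [Finset.sum_congr rfl (fun g _ => h0 g), Finset.sum_ite_eq' Finset.univ a
          (fun g => C (ψ p a) * X g), if_pos (Finset.mem_univ a)]
      rw [hsum']
      have hs : (∑ g : G, C (ψ p g) * X g) * X a = ∑ g : G, C (ψ p g) * (X g * X a) := by
        rw [Finset.sum_mul]
        exact Finset.sum_congr rfl fun g _ => by rw [mul_assoc]
      have hdec : p * X a - C (ψ p a) * X a
          = (p - ∑ g : G, C (ψ p g) * X g) * X a
            + (C (ψ p a) * ((X a) ^ 2 - X a)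
              + ∑ g ∈ Finset.univ.erase a, C (ψ p g) * (X g * X a)) := by
        rw [sub_mul, hs,
          ← Finset.add_sum_erase _ (fun g => C (ψ p g) * (X g * X a)) (Finset.mem_univ a)]
        ring
      rw [hdec]
      exact add_mem (Ideal.mul_mem_right _ _ hp) (add_mem (Ideal.mul_mem_left _ _ (hX2 a))
        (Ideal.sum_mem _ fun g hg => Ideal.mul_mem_left _ _ (hXX g a (Finset.ne_of_mem_erase hg))))
  have hker : RingHom.ker ψ.toRingHom = J := by
    apply le_antisymm
    · intro p hp
      rw [RingHom.mem_ker] at hp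
      have hp' : ψ p = 0 := hp
      have h1 := hkey p
      rw [hp'] at h1
      simpa using h1
    · rw [Ideal.span_le]
      rintro q (⟨⟨a, b⟩, hab, rfl⟩ | rfl)
      · have : ψ (X a * X b) = 0 := by
          rw [map_mul, hψX, hψX]
          funext x
          rw [Pi.mul_apply, Pi.single_apply, Pi.single_apply, Pi.zero_apply]
          by_cases hx : x = a
          · rw [if_pos hx, if_neg (by rintro rfl; subst hx; exact hab rfl), one_mul]
          · rw [if_neg hx, zero_mul]
        exact this
      · have : ψ ((∑ g : G, X g) - 1) = 0 := by
          rw [map_sub, map_sum, map_one]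
          have h1 : ∑ g : G, ψ (X g) = 1 := by
            rw [Finset.sum_congr rfl (fun g _ => hψX g)]
            exact Finset.univ_sum_single 1
          rw [h1, sub_self]
        exact this
  refine ⟨G, inferInstance, ψ, hsurj, ?_⟩
  rw [hker]
  exact Submodule.fg_span (Set.Finite.union
    (Set.Finite.image _ (Set.toFinite _)) (Set.finite_singleton _))

end FPPi
theorem forward (G : Type) [Group G] [Fintype G] (k : Type) [CommRing k] [MulSemiringAction G k]
    (hnt : Nontrivial k)
    (hP : ∀ (A : Type) [CommRing A] [MulSemiringAction G A] (α : k →+* A),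
        (∀ (g : G) (x : k), α (g • x) = g • α x) →
        (@Algebra.FinitePresentation k A _ _ α.toAlgebra) →
        Nontrivial A →
        ∃ f : A →+* k, (∀ (g : G) (a : A), f (g • a) = g • f a) ∧ f.comp α = RingHom.id k) :
    ∃ (F : Type) (fld : Field F),
        letI : Field F := fld
        IsAlgClosed F ∧
          ∃ e : k ≃+* (G → F), ∀ (g : G) (x : k), e (g • x) = fun h => e x (h * g) := by
  classical
  haveI := hnt
  -- Step 1 : apply the hypothesis to the test algebra Fun(G,k)
  let α₀ : k →+* Fn G k :=
    { toFun := fun x => Fn.mk fun h => h • x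
      map_one' := funext fun h => smul_one h
      map_mul' := fun x y => funext fun h => smul_mul' h x y
      map_zero' := funext fun h => smul_zero h
      map_add' := fun x y => funext fun h => smul_add h x y }
  have hα₀ev : ∀ (x : k) (h : G), Fn.ev (α₀ x) h = h • x := fun _ _ => rfl
  have hα₀ : ∀ (g : G) (x : k), α₀ (g • x) = g • α₀ x := by
    intro g x
    apply Fn.ext
    intro h
    rw [Fn.ev_smul, hα₀ev, hα₀ev, ← mul_smul]
  have hFPtw : @Algebra.FinitePresentation k (Fn G k) _ _ α₀.toAlgebra := by
    haveI hFPstd : Algebra.FinitePresentation k (G → k) := fp_pi_std G k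
    letI : Algebra k (Fn G k) := α₀.toAlgebra
    let T₀ : (G → k) ≃+* Fn G k :=
      { toFun := fun φ => Fn.mk fun x => x • φ x
        invFun := fun φ x => x⁻¹ • Fn.ev φ x
        left_inv := fun φ => funext fun x => inv_smul_smul x (φ x)
        right_inv := fun φ => Fn.ext fun x => smul_inv_smul x (Fn.ev φ x)
        map_add' := fun φ₁ φ₂ => Fn.ext fun x => smul_add x _ _
        map_mul' := fun φ₁ φ₂ => Fn.ext fun x => smul_mul' x _ _ }
    refine Algebra.FinitePresentation.equiv (R := k) (A := G → k)
      (AlgEquiv.ofRingEquiv (f := T₀) ?_)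
    intro c
    apply Fn.ext
    intro x
    rfl
  obtain ⟨f, hfeq, hfα⟩ := hP (Fn G k) α₀ hα₀ hFPtw inferInstance
  have hret : ∀ x : k, f (α₀ x) = x := fun x => RingHom.congr_fun hfα x
  -- the idempotents
  let ε : G → k := fun h => f (Fn.mk (Pi.single h 1))
  have hsingle : ∀ (g h : G), g • Fn.mk (Pi.single h (1:k)) = Fn.mk (Pi.single (h * g⁻¹) 1) := by
    intro g h
    apply Fn.ext
    intro x
    rw [Fn.ev_smul, Fn.ev_mk, Fn.ev_mk, Pi.single_apply, Pi.single_apply]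
    congr 1
    simp only [eq_iff_iff]
    constructor
    · rintro rfl; rw [mul_inv_cancel_right]
    · rintro rfl; rw [inv_mul_cancel_right]
  have hact : ∀ (g h : G), g • ε h = ε (h * g⁻¹) := by
    intro g h
    show g • f (Fn.mk (Pi.single h 1)) = f (Fn.mk (Pi.single (h * g⁻¹) 1))
    rw [← hfeq, hsingle]
  have hεh : ∀ h : G, ε h = h⁻¹ • ε 1 := fun h => by rw [hact h⁻¹ 1, one_mul, inv_inv]
  have hsum : ∑ h : G, ε h = 1 := by
    have h1 : ∑ h : G, Fn.mk (Pi.single h (1:k)) = (1 : Fn G k) := by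
      rw [show (fun h : G => Fn.mk (Pi.single h (1:k)))
          = fun h : G => Fn.mkRingEquiv (Pi.single h (1:k)) from rfl, ← map_sum,
        Finset.univ_sum_single]
      rfl
    calc ∑ h : G, ε h = f (∑ h : G, Fn.mk (Pi.single h 1)) := by rw [map_sum]
      _ = f 1 := by rw [h1]
      _ = 1 := map_one f
  have horth : ∀ a b : G, a ≠ b → ε a * ε b = 0 := by
    intro a b hab
    have h1 : Fn.mk (Pi.single a (1:k)) * Fn.mk (Pi.single b 1) = 0 := by
      apply Fn.ext
      intro x
      rw [Fn.ev_mul, Pi.mul_apply, Fn.ev_mk, Fn.ev_mk, Fn.ev_zero, Pi.single_apply,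
        Pi.single_apply, Pi.zero_apply]
      by_cases hx : x = a
      · rw [if_pos hx, if_neg (by rintro rfl; subst hx; exact hab rfl), mul_zero]
      · rw [if_neg hx, zero_mul]
    show f _ * f _ = 0
    rw [← map_mul, h1, map_zero]
  have hidem : ε 1 * ε 1 = ε 1 := by
    have h1 : Fn.mk (Pi.single (1:G) (1:k)) * Fn.mk (Pi.single 1 1)
        = Fn.mk (Pi.single 1 1) := by
      apply Fn.ext
      intro x
      rw [Fn.ev_mul, Pi.mul_apply, Fn.ev_mk, Pi.single_apply]
      split
      · rw [one_mul]
      · rw [zero_mul]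
    show f _ * f _ = f _
    rw [← map_mul, h1]
  have hε0 : ε 1 ≠ 0 := by
    intro h0
    have h1 : (1:k) = 0 := by
      rw [← hsum, Finset.sum_congr rfl (fun h _ => by rw [hεh h, h0, smul_zero]),
        Finset.sum_const_zero]
    exact one_ne_zero h1
  -- the quotient field
  set I : Ideal k := Ideal.span {(1:k) - ε 1} with hI
  set π : k →+* k ⧸ I := Ideal.Quotient.mk I with hπ
  have hπε1 : π (ε 1) = 1 := by
    have h1 : π ((1:k) - ε 1) = 0 :=
      Ideal.Quotient.eq_zero_iff_mem.mpr (Ideal.subset_span rfl)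
    rw [map_sub, map_one, sub_eq_zero] at h1
    exact h1.symm
  have hπεh : ∀ h : G, h ≠ 1 → π (ε h) = 0 := by
    intro h hne
    calc π (ε h) = π (ε h) * π (ε 1) := by rw [hπε1, mul_one]
      _ = π (ε h * ε 1) := (map_mul _ _ _).symm
      _ = 0 := by rw [horth h 1 hne, map_zero]
  -- invariant lifts
  have hlift : ∀ y : k, ∃ b : k, (∀ g : G, g • b = b) ∧ π b = π y := by
    intro y
    refine ⟨∑ h : G, h⁻¹ • (ε 1 * y), ?_, ?_⟩
    · intro g
      rw [Finset.smul_sum]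
      refine Fintype.sum_bijective (fun h => h * g⁻¹) (Equiv.mulRight g⁻¹).bijective _ _ ?_
      intro h
      rw [← mul_smul]
      congr 1
      rw [mul_inv_rev, inv_inv]
    · rw [map_sum, Finset.sum_eq_single 1]
      · rw [inv_one, one_smul, map_mul, hπε1, one_mul]
      · intro h _ hne
        rw [smul_mul', ← hεh h, map_mul, hπεh h hne, zero_mul]
      · intro h1
        exact absurd (Finset.mem_univ 1) h1
  -- every nonzero invariant element is a unit
  have hunit : ∀ b : k, (∀ g : G, g • b = b) → b ≠ 0 → IsUnit b := by
    intro b hb hb0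
    by_cases hT : Ideal.span {b} = ⊤
    · exact Ideal.span_singleton_eq_top.mp hT
    · exfalso
      haveI hQnt : Nontrivial (k ⧸ Ideal.span {b}) := Ideal.Quotient.nontrivial_iff.mpr hT
      have hstab : ∀ (g : G) (x : k), x ∈ Ideal.span {b} → g • x ∈ Ideal.span {b} := by
        intro g x hx
        obtain ⟨c, hc⟩ := Ideal.mem_span_singleton'.mp hx
        rw [Ideal.mem_span_singleton']
        exact ⟨g • c, by rw [← hc, smul_mul', hb g]⟩
      letI actQ := quotAction (G := G) (Ideal.span {b}) hstab
      have hFPq : @Algebra.FinitePresentation k (k ⧸ Ideal.span {b}) _ _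
          (Ideal.Quotient.mk (Ideal.span {b})).toAlgebra := by
        have heq : (Ideal.Quotient.mk (Ideal.span {b})).toAlgebra
            = Ideal.Quotient.algebra k := Algebra.algebra_ext _ _ (fun r => rfl)
        rw [heq]
        exact Algebra.FinitePresentation.quotient (Submodule.fg_span_singleton b)
      obtain ⟨f', _, hf'α⟩ := hP (k ⧸ Ideal.span {b}) (Ideal.Quotient.mk _)
        (fun g x => (quotAction_mk _ hstab g x).symm) hFPq hQnt
      have hb' : b = 0 := by
        have h1 : Ideal.Quotient.mk (Ideal.span {b}) b = 0 :=
          Ideal.Quotient.eq_zero_iff_mem.mpr (Ideal.mem_span_singleton_self b)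
        calc b = f' (Ideal.Quotient.mk _ b) := (RingHom.congr_fun hf'α b).symm
          _ = 0 := by rw [h1, map_zero]
      exact hb0 hb'
  -- the quotient is a field
  have hIne : I ≠ ⊤ := by
    intro htop
    obtain ⟨c, hc⟩ := Ideal.mem_span_singleton'.mp
      (show (1:k) ∈ I from htop ▸ Submodule.mem_top)
    apply hε0
    calc ε 1 = c * ((1:k) - ε 1) * ε 1 := by rw [hc, one_mul]
      _ = c * (ε 1 - ε 1 * ε 1) := by ring
      _ = 0 := by rw [hidem, sub_self, mul_zero]
  haveI hFnt : Nontrivial (k ⧸ I) := Ideal.Quotient.nontrivial_iff.mpr hIne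
  have hfield : IsField (k ⧸ I) := by
    refine ⟨exists_pair_ne _, mul_comm, ?_⟩
    intro a ha
    obtain ⟨y, hy⟩ := Ideal.Quotient.mk_surjective (I := I) a
    obtain ⟨b, hbinv, hby⟩ := hlift y
    have hba : π b = a := by rw [hby, hπ, hy]
    have hb0 : b ≠ 0 := by
      rintro rfl
      rw [map_zero] at hba
      exact ha hba.symm
    obtain ⟨u, hu⟩ := hunit b hbinv hb0
    refine ⟨π ↑u⁻¹, ?_⟩
    calc a * π ↑u⁻¹ = π (b * ↑u⁻¹) := by rw [map_mul, hba]
      _ = π (↑u * ↑u⁻¹) := by rw [hu]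
      _ = 1 := by rw [Units.mul_inv, map_one]
  letI fld : Field (k ⧸ I) := hfield.toField
  -- algebraic closedness
  have hac : IsAlgClosed (k ⧸ I) := by
    apply IsAlgClosed.of_exists_root
    intro p hmonic hirr
    have hn0 : p.natDegree ≠ 0 := by
      intro h0
      exact hirr.not_isUnit (by rw [hmonic.natDegree_eq_zero.mp h0]; exact isUnit_one)
    set n := p.natDegree with hn
    have hcoefflift : ∀ j : ℕ, ∃ b : k, (∀ g : G, g • b = b) ∧ π b = p.coeff j := by
      intro j
      obtain ⟨y, hy⟩ := Ideal.Quotient.mk_surjective (I := I) (p.coeff j)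
      obtain ⟨b, h1, h2⟩ := hlift y
      exact ⟨b, h1, by rw [h2, hπ, hy]⟩
    choose b hbinv hbπ using hcoefflift
    set q : Polynomial k :=
      Polynomial.X ^ n + ∑ j ∈ Finset.range n, Polynomial.C (b j) * Polynomial.X ^ j with hq
    have hsdeg : (∑ j ∈ Finset.range n, Polynomial.C (b j) * Polynomial.X ^ j).degree
        < (n : WithBot ℕ) := by
      apply lt_of_le_of_lt (Polynomial.degree_sum_le _ _)
      rw [Finset.sup_lt_iff (by exact_mod_cast WithBot.bot_lt_coe n)]
      intro j hj
      apply lt_of_le_of_lt (Polynomial.degree_C_mul_X_pow_le _ _)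
      exact_mod_cast Finset.mem_range.mp hj
    have hqmonic : q.Monic := Polynomial.monic_X_pow_add hsdeg
    have hqdeg : q.natDegree = n := by
      have h1 : q.degree = (n : WithBot ℕ) := by
        rw [hq, Polynomial.degree_add_eq_left_of_degree_lt
          (by rwa [Polynomial.degree_X_pow]), Polynomial.degree_X_pow]
      exact Polynomial.natDegree_eq_of_degree_eq_some h1
    have hqinv : ∀ g : G, g • q = q := by
      intro g
      rw [hq, smul_add, smul_pow', Polynomial.smul_X, Finset.smul_sum]
      congr 1
      refine Finset.sum_congr rfl fun j _ => ?_
      rw [smul_mul', Polynomial.smul_C, hbinv, smul_pow', Polynomial.smul_X]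
    have hstabq : ∀ (g : G) (x : Polynomial k),
        x ∈ Ideal.span {q} → g • x ∈ Ideal.span {q} := by
      intro g x hx
      obtain ⟨c, hc⟩ := Ideal.mem_span_singleton'.mp hx
      rw [Ideal.mem_span_singleton']
      exact ⟨g • c, by rw [← hc, smul_mul', hqinv]⟩
    letI actq := quotAction (G := G) (Ideal.span {q}) hstabq
    set αq : k →+* Polynomial k ⧸ Ideal.span {q} :=
      (Ideal.Quotient.mk (Ideal.span {q})).comp Polynomial.C with hαq
    have hαqeq : ∀ (g : G) (x : k), αq (g • x) = g • αq x := by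
      intro g x
      show Ideal.Quotient.mk _ (Polynomial.C (g • x)) = g • Ideal.Quotient.mk _ (Polynomial.C x)
      rw [← Polynomial.smul_C, quotAction_mk]
    have hFPq : @Algebra.FinitePresentation k (Polynomial k ⧸ Ideal.span {q}) _ _
        αq.toAlgebra := by
      have heq : αq.toAlgebra = Ideal.Quotient.algebra k := Algebra.algebra_ext _ _ (fun r => rfl)
      rw [heq]
      exact Algebra.FinitePresentation.quotient (Submodule.fg_span_singleton q)
    haveI hqnt : Nontrivial (Polynomial k ⧸ Ideal.span {q}) := by
      apply Ideal.Quotient.nontrivial_iff.mpr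
      intro htop
      have h1 := Ideal.span_singleton_eq_top.mp htop
      rw [hqmonic.isUnit_iff] at h1
      apply hn0
      rw [← hqdeg, h1, Polynomial.natDegree_one]
    obtain ⟨fq, _, hfqα⟩ := hP (Polynomial k ⧸ Ideal.span {q}) αq hαqeq hFPq hqnt
    set Φ : Polynomial k →+* k := fq.comp (Ideal.Quotient.mk (Ideal.span {q})) with hΦ
    have hrootk : Φ Polynomial.X ^ n + ∑ j ∈ Finset.range n, b j * Φ Polynomial.X ^ j = 0 := by
      have h0 : Φ q = 0 := by
        rw [hΦ, RingHom.comp_apply,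
          show Ideal.Quotient.mk (Ideal.span {q}) q = 0 from
            Ideal.Quotient.eq_zero_iff_mem.mpr (Ideal.mem_span_singleton_self q), map_zero]
      rw [hq, map_add, map_pow, map_sum] at h0
      rw [← h0]
      congr 1
      refine Finset.sum_congr rfl fun j _ => ?_
      rw [map_mul, map_pow]
      congr 1
      exact (RingHom.congr_fun hfqα (b j)).symm
    refine ⟨π (Φ Polynomial.X), ?_⟩
    have hπroot : π (Φ Polynomial.X) ^ n
        + ∑ j ∈ Finset.range n, p.coeff j * π (Φ Polynomial.X) ^ j = 0 := by
      have h1 := congrArg π hrootk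
      rw [map_add, map_pow, map_sum, map_zero] at h1
      rw [← h1]
      congr 1
      refine Finset.sum_congr rfl fun j _ => ?_
      rw [map_mul, map_pow, hbπ]
    rw [Polynomial.eval_eq_sum_range, Finset.sum_range_succ, ← hn, hmonic.coeff_natDegree,
      one_mul, add_comm]
    exact hπroot
  -- the equivariant isomorphism
  have hε1mul : ∀ x : k, (∀ h : G, π (h • x) = 0) → x = 0 := by
    intro x hx
    have h1 : ∀ h : G, x * ε h = 0 := by
      intro h
      obtain ⟨c, hc⟩ := Ideal.mem_span_singleton'.mp
        (Ideal.Quotient.eq_zero_iff_mem.mp (hx h))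
      have h2 : ε 1 * (h • x) = 0 := by
        rw [← hc]
        calc ε 1 * (c * (1 - ε 1)) = c * (ε 1 - ε 1 * ε 1) := by ring
          _ = 0 := by rw [hidem, sub_self, mul_zero]
      calc x * ε h = h⁻¹ • (ε 1 * (h • x)) := by
            rw [smul_mul', ← hεh h, ← mul_smul, inv_mul_cancel, one_smul, mul_comm]
        _ = 0 := by rw [h2, smul_zero]
    calc x = x * ∑ h : G, ε h := by rw [hsum, mul_one]
      _ = ∑ h : G, x * ε h := Finset.mul_sum _ _ _
      _ = 0 := by rw [Finset.sum_congr rfl fun h _ => h1 h, Finset.sum_const_zero]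
  let eh : k →+* (G → k ⧸ I) := Pi.ringHom (fun h => π.comp (MulSemiringAction.toRingHom G k h))
  have heh : ∀ (x : k) (h : G), eh x h = π (h • x) := fun _ _ => rfl
  have hinj : Function.Injective eh := by
    rw [injective_iff_map_eq_zero]
    intro x hx
    exact hε1mul x fun h => congrFun hx h
  have hsurje : Function.Surjective eh := by
    intro φ
    have hch : ∀ h : G, ∃ y : k, π y = φ h := fun h => Ideal.Quotient.mk_surjective (φ h)
    choose y hy using hch
    refine ⟨∑ h' : G, h'⁻¹ • (ε 1 * y h'), ?_⟩
    funext h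
    rw [heh, Finset.smul_sum, map_sum, Finset.sum_eq_single h]
    · rw [← mul_smul, mul_inv_cancel, one_smul, map_mul, hπε1, one_mul, hy]
    · intro h' _ hne
      rw [← mul_smul, smul_mul']
      have hg : (h * h'⁻¹) • ε 1 = ε (h' * h⁻¹) := by
        rw [hact, one_mul, mul_inv_rev, inv_inv]
      rw [hg, map_mul, hπεh _ (by
        intro hcon
        apply hne
        have := congrArg (fun z => z * h) hcon
        simpa [mul_assoc] using this), zero_mul]
    · intro h1
      exact absurd (Finset.mem_univ h) h1
  refine ⟨k ⧸ I, fld, hac, RingEquiv.ofBijective eh ⟨hinj, hsurje⟩, ?_⟩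
  intro g x
  funext h
  show eh (g • x) h = eh x (h * g)
  rw [heh, heh, mul_smul]

theorem backward (G : Type) [Group G] [Fintype G] (k : Type) [CommRing k]
    [MulSemiringAction G k] (F : Type) [Field F] [IsAlgClosed F]
    (e : k ≃+* (G → F)) (he : ∀ (g : G) (x : k), e (g • x) = fun h => e x (h * g)) :
    Nontrivial k ∧
      ∀ (A : Type) [CommRing A] [MulSemiringAction G A] (α : k →+* A),
        (∀ (g : G) (x : k), α (g • x) = g • α x) →
        (@Algebra.FinitePresentation k A _ _ α.toAlgebra) →
        Nontrivial A →
        ∃ f : A →+* k, (∀ (g : G) (a : A), f (g • a) = g • f a) ∧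
          f.comp α = RingHom.id k := by
  classical
  have hknt : Nontrivial k := e.toEquiv.nontrivial
  refine ⟨hknt, ?_⟩
  intro A _ _ α hα hfp hA
  -- the embedding of F into k as "constant functions"
  let ι : F →+* k := e.symm.toRingHom.comp (Pi.constRingHom G F)
  have hιe : ∀ (c : F) (h : G), e (ι c) h = c := by
    intro c h
    show e (e.symm _) h = c
    rw [e.apply_symm_apply]; rfl
  -- the idempotents
  let δ : G → k := fun h => e.symm (Pi.single h 1)
  have heδ : ∀ h, e (δ h) = Pi.single h 1 := fun h => e.apply_symm_apply _
  have hδsum : (∑ h : G, δ h) = 1 := by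
    apply e.injective
    rw [map_sum, map_one]
    simp only [heδ]
    exact Finset.univ_sum_single (1 : G → F)
  have hδact : ∀ (g h : G), g • δ h = δ (h * g⁻¹) := by
    intro g h
    apply e.injective
    rw [he, heδ, heδ]
    funext x
    simp only [Pi.single_apply]
    congr 1
    simp only [eq_iff_iff]
    constructor
    · rintro rfl; rw [mul_inv_cancel_right]
    · rintro rfl; rw [inv_mul_cancel_right]
  have hδidem : δ 1 * δ 1 = δ 1 := by
    apply e.injective
    rw [map_mul, heδ]
    funext x
    by_cases hx : x = 1 <;> simp [Pi.single_apply, hx]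
  -- A₁ : the quotient at the identity component
  have hI₁ne : Ideal.span {1 - α (δ 1)} ≠ (⊤ : Ideal A) := by
    intro htop
    have h1 : (1 : A) ∈ Ideal.span {1 - α (δ 1)} := htop ▸ Submodule.mem_top
    obtain ⟨c, hc⟩ := Ideal.mem_span_singleton'.mp h1
    have hidem : α (δ 1) * α (δ 1) = α (δ 1) := by rw [← map_mul, hδidem]
    have hε1 : α (δ 1) = 0 := by
      calc α (δ 1) = 1 * α (δ 1) := (one_mul _).symm
        _ = c * (1 - α (δ 1)) * α (δ 1) := by rw [hc]
        _ = c * (α (δ 1) - α (δ 1) * α (δ 1)) := by ring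
        _ = 0 := by rw [hidem, sub_self, mul_zero]
    have hεh : ∀ h : G, α (δ h) = 0 := by
      intro h
      have hd : δ h = h⁻¹ • δ 1 := by rw [hδact, one_mul, inv_inv]
      rw [hd, hα, hε1, smul_zero]
    have : (1 : A) = 0 := by
      calc (1 : A) = α 1 := (map_one α).symm
        _ = α (∑ h : G, δ h) := by rw [hδsum]
        _ = ∑ h : G, α (δ h) := by rw [map_sum]
        _ = 0 := by simp [hεh]
    exact one_ne_zero this
  letI hA₁nt : Nontrivial (A ⧸ Ideal.span {1 - α (δ 1)}) := Ideal.Quotient.nontrivial_iff.mpr hI₁ne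
  let mkq : A →+* A ⧸ Ideal.span {1 - α (δ 1)} := Ideal.Quotient.mk _
  -- algebra structures
  letI algkA : Algebra k A := α.toAlgebra
  letI algkA₁ : Algebra k (A ⧸ Ideal.span {1 - α (δ 1)}) := (mkq.comp α).toAlgebra
  letI algFk : Algebra F k := ι.toAlgebra
  letI algFA₁ : Algebra F (A ⧸ Ideal.span {1 - α (δ 1)}) := ((mkq.comp α).comp ι).toAlgebra
  letI : IsScalarTower F k (A ⧸ Ideal.span {1 - α (δ 1)}) :=
    IsScalarTower.of_algebraMap_eq (fun c => rfl)
  -- finite type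
  haveI : Algebra.FiniteType k A := @Algebra.FiniteType.of_finitePresentation k A _ _ _ hfp
  haveI hftkA₁ : Algebra.FiniteType k (A ⧸ Ideal.span {1 - α (δ 1)}) :=
    Algebra.FiniteType.of_surjective
      { toRingHom := mkq, commutes' := fun r => rfl }
      Ideal.Quotient.mk_surjective
  haveI : Module.Finite F (G → F) := inferInstance
  haveI hMF : Module.Finite F k := Module.Finite.equiv
    { toFun := e.symm, invFun := e, left_inv := fun x => e.apply_symm_apply x,
      right_inv := fun x => e.symm_apply_apply x,
      map_add' := fun x y => map_add _ x y,
      map_smul' := fun c φ => by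
        show e.symm (c • φ) = ι c * e.symm φ
        have hc : c • φ = (Pi.constRingHom G F) c * φ := rfl
        rw [hc, map_mul]
        rfl }
  haveI hftFk : Algebra.FiniteType F k := inferInstance
  haveI hftFA₁ : Algebra.FiniteType F (A ⧸ Ideal.span {1 - α (δ 1)}) :=
    @Algebra.FiniteType.trans F k _ _ _ _ _ _ _ (IsScalarTower.of_algebraMap_eq (fun c => rfl)) hftFk hftkA₁
  -- a maximal ideal of A₁ and the residue field
  obtain ⟨m, hm⟩ := Ideal.exists_maximal (A ⧸ Ideal.span {1 - α (δ 1)})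
  haveI := hm
  letI : Field ((A ⧸ Ideal.span {1 - α (δ 1)}) ⧸ m) := Ideal.Quotient.field m
  obtain ⟨n, u, hu⟩ := Algebra.FiniteType.iff_quotient_mvPolynomial''.mp hftFA₁
  let fL : MvPolynomial (Fin n) F →+* (A ⧸ Ideal.span {1 - α (δ 1)}) ⧸ m :=
    (Ideal.Quotient.mk m).comp u.toRingHom
  have hfLsurj : Function.Surjective fL := Ideal.Quotient.mk_surjective.comp hu
  have hint : (fL.comp MvPolynomial.C).IsIntegral :=
    MvPolynomial.comp_C_integral_of_surjective_of_isJacobsonRing fL hfLsurj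
  have hjsurj : Function.Surjective (fL.comp MvPolynomial.C) :=
    (@IsAlgClosed.algebraMap_bijective_of_isIntegral F _ _ _ _ _ (fL.comp MvPolynomial.C).toAlgebra
      (@Algebra.IsIntegral.mk F _ _ _ (fL.comp MvPolynomial.C).toAlgebra hint)).2
  have hjinj : Function.Injective (fL.comp MvPolynomial.C) :=
    (fL.comp MvPolynomial.C).injective
  let jE : F ≃+* (A ⧸ Ideal.span {1 - α (δ 1)}) ⧸ m :=
    RingEquiv.ofBijective (fL.comp MvPolynomial.C) ⟨hjinj, hjsurj⟩
  -- the character A → F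
  let c : A →+* F := (jE.symm.toRingHom.comp (Ideal.Quotient.mk m)).comp mkq
  have hkey : ∀ y : F, c (α (ι y)) = y := by
    intro y
    have h1 : (Ideal.Quotient.mk m) (mkq (α (ι y))) = jE y := by
      show _ = fL (MvPolynomial.C y)
      have : u (MvPolynomial.C y) = mkq (α (ι y)) := by
        have := u.commutes y
        rwa [show (algebraMap F (MvPolynomial (Fin n) F)) y = MvPolynomial.C y from rfl] at this
      show (Ideal.Quotient.mk m) (mkq (α (ι y))) = (Ideal.Quotient.mk m) (u (MvPolynomial.C y))
      rw [this]
    show jE.symm ((Ideal.Quotient.mk m) (mkq (α (ι y)))) = y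
    rw [h1, jE.symm_apply_apply]
  have hc0 : ∀ z : A, z ∈ Ideal.span {1 - α (δ 1)} → c z = 0 := by
    intro z hz
    show jE.symm ((Ideal.Quotient.mk m) (mkq z)) = 0
    rw [show mkq z = 0 from Ideal.Quotient.eq_zero_iff_mem.mpr hz]
    simp
  -- the value of c on the image of k
  have hcα : ∀ y : k, c (α y) = e y 1 := by
    intro y
    have hz : y - ι (e y 1) ∈ Ideal.span {1 - δ 1} := by
      rw [Ideal.mem_span_singleton]
      refine ⟨y - ι (e y 1), ?_⟩
      apply e.injective
      simp only [map_mul, map_sub, map_one, heδ]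
      funext x
      by_cases hx : x = 1
      · subst hx
        simp only [Pi.mul_apply, Pi.sub_apply, Pi.one_apply, Pi.single_eq_same]
        rw [hιe]
        ring
      · simp only [Pi.mul_apply, Pi.sub_apply, Pi.one_apply, Pi.single_apply, if_neg hx]
        ring
    obtain ⟨w, hw⟩ := Ideal.mem_span_singleton.mp hz
    have hαz : α y - α (ι (e y 1)) ∈ Ideal.span {1 - α (δ 1)} := by
      rw [Ideal.mem_span_singleton, ← map_sub, hw]
      exact ⟨α w, by rw [map_mul, map_sub, map_one]⟩
    have := hc0 _ hαz
    rw [map_sub, sub_eq_zero] at this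
    rw [this, hkey]
  -- assemble the retraction
  refine ⟨e.symm.toRingHom.comp (Pi.ringHom (fun h =>
      c.comp (MulSemiringAction.toRingHom G A h))), ?_, ?_⟩
  · intro g a
    apply e.injective
    rw [he]
    show e (e.symm _) = fun h => (e (e.symm _)) (h * g)
    rw [e.apply_symm_apply, e.apply_symm_apply]
    funext h
    show c (h • (g • a)) = c ((h * g) • a)
    rw [← mul_smul]
  · ext y
    show e.symm (fun h => c (h • α y)) = y
    apply e.injective
    rw [e.apply_symm_apply]
    funext h
    show c (h • α y) = e y h
    rw [← hα, hcα, he]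
    simp

/-- A G-ring k is Nullstellensatzian in the category of G-rings iff it is
G-equivariantly isomorphic to Fun(G,F) (with action (g • φ) h = φ (h * g))
for some algebraically closed field F. -/
theorem stmt10 (G : Type) [Group G] [Fintype G] (k : Type) [CommRing k]
    [MulSemiringAction G k] :
    (Nontrivial k ∧
      ∀ (A : Type) [CommRing A] [MulSemiringAction G A] (α : k →+* A),
        (∀ (g : G) (x : k), α (g • x) = g • α x) →
        (@Algebra.FinitePresentation k A _ _ α.toAlgebra) →
        Nontrivial A →
        ∃ f : A →+* k, (∀ (g : G) (a : A), f (g • a) = g • f a) ∧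
          f.comp α = RingHom.id k) ↔
      ∃ (F : Type) (fld : Field F),
        letI : Field F := fld
        IsAlgClosed F ∧
          ∃ e : k ≃+* (G → F),
            ∀ (g : G) (x : k), e (g • x) = fun h => e x (h * g) := by
  constructor
  · rintro ⟨hnt, hP⟩
    exact forward G k hnt hP
  · rintro ⟨F, fld, h⟩
    letI := fld
    obtain ⟨hac, e, he⟩ := h
    haveI := hac
    exact backward G k F e he
end

section
/- In any category C, the class of compact morphisms is closed under composition: if f : x → y is a compact object of x/C and g : y → z is a compact object of y/C, then g ∘ f is a compact object of x/C. -/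
open CategoryTheory CategoryTheory.Limits Opposite

universe v₁ u₁ v₂ u₂

/-- An object is compact (finitely presentable) if its corepresentable functor
preserves filtered colimits. -/
def IsCompactObj {C : Type u₁} [Category.{v₁} C] (x : C) : Prop :=
  ∀ (I : Type) [SmallCategory I] [IsFiltered I],
    Nonempty (PreservesColimitsOfShape I (coyoneda.obj (op x)))

/-- A functor preserves filtered colimits. -/
def PresFiltered {C : Type u₁} [Category.{v₁} C] {D : Type u₂} [Category.{v₂} D]
    (F : C ⥤ D) : Prop :=
  ∀ (I : Type) [SmallCategory I] [IsFiltered I], Nonempty (PreservesColimitsOfShape I F)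

section Aux

universe w w'

variable {C : Type u₁} [Category.{v₁} C] {I : Type w} [Category.{w'} I]

lemma under_const_comp [IsPreconnected I] {x : C} (K : I ⥤ Under x)
    (c : Cocone (K ⋙ Under.forget x)) (j j' : I) :
    (K.obj j).hom ≫ c.ι.app j = (K.obj j').hom ≫ c.ι.app j' :=
  nat_trans_from_is_connected (J := I)
    { app := fun j => (K.obj j).hom ≫ c.ι.app j
      naturality := fun a b m => by
        have h1 : (K.map m).right ≫ c.ι.app b = c.ι.app a := by
          simpa using c.w m
        dsimp
        rw [Category.comp_id, Category.id_comp, ← h1]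
        exact (Under.w_assoc (K.map m) (c.ι.app b)).symm } j j'

variable [IsFiltered I]

attribute [local instance] IsFiltered.nonempty IsFiltered.isConnected

/-- Raise a cocone on the underlying diagram to the under category. -/
@[simps]
noncomputable def raiseCocone {x : C} (K : I ⥤ Under x) (c : Cocone (K ⋙ Under.forget x)) : Cocone K where
  pt := Under.mk ((K.obj (Classical.arbitrary I)).hom ≫ c.ι.app (Classical.arbitrary I))
  ι :=
    { app := fun j => Under.homMk (c.ι.app j)
        (by simpa using under_const_comp K c j (Classical.arbitrary I))
      naturality := fun a b m => by
        apply Under.UnderMorphism.ext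
        exact (c.w m).trans (Category.comp_id _).symm }

@[simp] lemma raiseCocone_pt_hom' {x : C} (K : I ⥤ Under x) (c : Cocone (K ⋙ Under.forget x)) :
    (raiseCocone K c).pt.hom = (K.obj (Classical.arbitrary I)).hom ≫ c.ι.app (Classical.arbitrary I) :=
  rfl

@[simp] lemma raiseCocone_pt_right' {x : C} (K : I ⥤ Under x) (c : Cocone (K ⋙ Under.forget x)) :
    (raiseCocone K c).pt.right = c.pt :=
  rfl

/-- The forgetful functor from the under category preserves filtered colimits. -/
noncomputable def forgetIsColimit {x : C} {K : I ⥤ Under x} {s : Cocone K}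
    (hs : IsColimit s) : IsColimit ((Under.forget x).mapCocone s) where
  desc c := (hs.desc (raiseCocone K c)).right
  fac c j := by
    have h := congrArg Under.Hom.right (hs.fac (raiseCocone K c) j)
    simp only [Under.comp_right, raiseCocone_ι_app, Under.homMk_right] at h
    dsimp
    exact h
  uniq c m hm := by
    have key : Under.homMk (V := (raiseCocone K c).pt) m
        (by
          have hw : (K.obj (Classical.arbitrary I)).hom ≫
              (s.ι.app (Classical.arbitrary I)).right = s.pt.hom := by
            simpa using Under.w (s.ι.app (Classical.arbitrary I))
          have hm0 := hm (Classical.arbitrary I)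
          dsimp at hm0
          exact Eq.trans (congrArg (fun t => t ≫ m) hw.symm) (Eq.trans (Category.assoc _ _ _)
            (congrArg (fun t => (K.obj (Classical.arbitrary I)).hom ≫ t) hm0))) = hs.desc (raiseCocone K c) := by
      refine hs.uniq (raiseCocone K c) _ fun j => ?_
      apply Under.UnderMorphism.ext
      exact hm j
    exact congrArg Under.Hom.right key

variable {x : C} (K : I ⥤ Under x) (i : I) {w : C} (u : w ⟶ (K.obj i).right)

/-- The diagram in `Under w` indexed by `Under i` induced by `K` and `u`. -/
@[simps]
def underDiag : Under i ⥤ Under w where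
  obj j := Under.mk (u ≫ (K.map j.hom).right)
  map {j j'} m := Under.homMk (K.map m.right).right
    (by
      dsimp
      rw [Category.assoc, ← Under.comp_right, ← K.map_comp, Under.w m])
  map_id j := by
    apply Under.UnderMorphism.ext
    simp
  map_comp {a b c} m m' := by
    apply Under.UnderMorphism.ext
    simp

@[simp] lemma underDiag_obj_hom' (j : Under i) :
    ((underDiag K i u).obj j).hom = u ≫ (K.map j.hom).right :=
  rfl

@[simp] lemma underDiag_obj_right' (j : Under i) :
    ((underDiag K i u).obj j).right = (K.obj j.right).right :=
  rfl

variable (s : Cocone K)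

/-- The induced cocone on `underDiag`. -/
@[simps]
def underDiagCocone : Cocone (underDiag K i u) where
  pt := Under.mk (u ≫ (s.ι.app i).right)
  ι :=
    { app := fun j => Under.homMk (s.ι.app j.right).right
        (by
          have hw : K.map j.hom ≫ s.ι.app j.right = s.ι.app i := by simpa using s.w j.hom
          dsimp
          rw [Category.assoc, ← Under.comp_right, hw])
      naturality := fun a b m => by
        apply Under.UnderMorphism.ext
        have : K.map m.right ≫ s.ι.app b.right = s.ι.app a.right := s.w m.right
        dsimp
        exact (congrArg Under.Hom.right this).trans (Category.comp_id _).symm }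

@[simp] lemma underDiagCocone_pt_hom' :
    (underDiagCocone K i u s).pt.hom = u ≫ (s.ι.app i).right :=
  rfl

@[simp] lemma underDiagCocone_pt_right' :
    (underDiagCocone K i u s).pt.right = s.pt.right :=
  rfl

/-- The underlying cocone in `C` of a cocone on `underDiag`. -/
@[simps]
def lowerCocone (t' : Cocone (underDiag K i u)) :
    Cocone (Under.forget i ⋙ K ⋙ Under.forget x) where
  pt := t'.pt.right
  ι :=
    { app := fun j => (t'.ι.app j).right
      naturality := fun a b m => by
        exact (congrArg Under.Hom.right (t'.w m)).trans (Category.comp_id _).symm }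

/-- `underDiagCocone` is a colimit. -/
noncomputable def underDiagCoconeIsColimit (hs : IsColimit s) :
    IsColimit (underDiagCocone K i u s) := by
  have hsW : IsColimit (((Under.forget x).mapCocone s).whisker (Under.forget i)) :=
    (Functor.Final.isColimitWhiskerEquiv (Under.forget i) _).symm (forgetIsColimit hs)
  refine
    { desc := fun t' => Under.homMk (hsW.desc (lowerCocone K i u t'))
        (by
          have h0 := hsW.fac (lowerCocone K i u t') (Under.mk (𝟙 i))
          have h1 := Under.w (t'.ι.app (Under.mk (𝟙 i)))
          dsimp at h0 h1 ⊢
          exact (Category.assoc _ _ _).trans ((congrArg (fun t => u ≫ t) h0).trans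
            (by
              have h1' : u ≫ (t'.ι.app (Under.mk (𝟙 i))).right = t'.pt.hom := by simpa using h1
              exact h1')))
      fac := fun t' j => ?_
      uniq := fun t' m hm => ?_ }
  · apply Under.UnderMorphism.ext
    exact hsW.fac (lowerCocone K i u t') j
  · apply Under.UnderMorphism.ext
    refine Eq.trans ?_ (Under.homMk_right _ _).symm
    refine hsW.uniq (lowerCocone K i u t') m.right fun j => ?_
    exact congrArg Under.Hom.right (hm j)

end Aux

/-- Compact morphisms are closed under composition. -/
theorem stmt11 {C : Type u₁} [Category.{v₁} C] {x y z : C} (f : x ⟶ y) (g : y ⟶ z)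
    (hf : IsCompactObj (Under.mk f)) (hg : IsCompactObj (Under.mk g)) :
    IsCompactObj (Under.mk (f ≫ g)) := by
  intro I _ _
  haveI := (hf I).some
  refine ⟨⟨fun {K} => ⟨fun {s} hs => ⟨?_⟩⟩⟩⟩
  have hF : IsColimit ((coyoneda.obj (op (Under.mk f))).mapCocone s) :=
    isColimitOfPreserves _ hs
  apply Types.FilteredColimit.isColimitOf
  · -- joint surjectivity
    intro x0
    obtain ⟨i, k0, hk0⟩ := Types.jointly_surjective _ hF
      (Under.homMk (g ≫ x0.right) (by simpa using Under.w x0) : Under.mk f ⟶ s.pt)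
    have hk : k0 ≫ s.ι.app i = Under.homMk (g ≫ x0.right) (by simpa using Under.w x0) := by
      simpa using hk0
    have hr : g ≫ x0.right = k0.right ≫ (s.ι.app i).right := by
      simpa using (congrArg Under.Hom.right hk).symm
    haveI := (hg (Under i)).some
    have hD : IsColimit ((coyoneda.obj (op (Under.mk g))).mapCocone
        (underDiagCocone K i k0.right s)) :=
      isColimitOfPreserves _ (underDiagCoconeIsColimit K i k0.right s hs)
    obtain ⟨j, m0, hm0⟩ := Types.jointly_surjective _ hD
      (Under.homMk (U := Under.mk g) (V := (underDiagCocone K i k0.right s).pt) x0.right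
        (by simpa using hr))
    have hm : m0 ≫ (underDiagCocone K i k0.right s).ι.app j =
        Under.homMk (U := Under.mk g) (V := (underDiagCocone K i k0.right s).pt) x0.right
          (by simpa using hr) := by exact hm0
    have hmr : m0.right ≫ (s.ι.app j.right).right = x0.right := by
      exact congrArg Under.Hom.right hm
    have hfk : f ≫ k0.right = (K.obj i).hom := by simpa using Under.w k0
    have hgm : g ≫ m0.right = k0.right ≫ (K.map j.hom).right := by
      simpa using Under.w m0
    refine ⟨j.right, Under.homMk m0.right ?_, ?_⟩
    · show (f ≫ g) ≫ m0.right = (K.obj j.right).hom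
      have hw : (K.obj i).hom ≫ (K.map j.hom).right = (K.obj j.right).hom := by
        simpa using Under.w (K.map j.hom)
      rw [Category.assoc, hgm]
      exact (Category.assoc _ _ _).symm.trans
        ((congrArg (fun t => t ≫ (K.map j.hom).right) hfk).trans hw)
    · show x0 = (coyoneda.obj (op (Under.mk (f ≫ g)))).map (s.ι.app j.right) _
      apply Under.UnderMorphism.ext
      exact hmr.symm
  · -- joint injectivity
    intro i i' h₁ h₂ hh
    have hh' : h₁ ≫ s.ι.app i = h₂ ≫ s.ι.app i' := by simpa using hh
    set p := IsFiltered.max i i' with hp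
    set H₁ : Under.mk (f ≫ g) ⟶ K.obj p := h₁ ≫ K.map (IsFiltered.leftToMax i i') with hH₁
    set H₂ : Under.mk (f ≫ g) ⟶ K.obj p := h₂ ≫ K.map (IsFiltered.rightToMax i i') with hH₂
    have hH : H₁ ≫ s.ι.app p = H₂ ≫ s.ι.app p := by
      rw [hH₁, hH₂, Category.assoc, Category.assoc, s.w (IsFiltered.leftToMax i i'),
        s.w (IsFiltered.rightToMax i i'), hh']
    set k₁ : Under.mk f ⟶ K.obj p := Under.homMk (g ≫ H₁.right)
      (by simpa using Under.w H₁) with hk₁d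
    set k₂ : Under.mk f ⟶ K.obj p := Under.homMk (g ≫ H₂.right)
      (by simpa using Under.w H₂) with hk₂d
    have hk₁r : k₁.right = g ≫ H₁.right := by rw [hk₁d]; simp
    have hk₂r : k₂.right = g ≫ H₂.right := by rw [hk₂d]; simp
    have hk12 : k₁ ≫ s.ι.app p = k₂ ≫ s.ι.app p := by
      apply Under.UnderMorphism.ext
      have hHs := congrArg Under.Hom.right hH
      simp only [Under.comp_right] at hHs ⊢
      rw [hk₁r, hk₂r, Category.assoc, Category.assoc, hHs]
    obtain ⟨q, a, b, hab⟩ := (Types.FilteredColimit.isColimit_eq_iff _ hF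
      (xi := k₁) (xj := k₂)).mp (by simpa using hk12)
    have hab' : k₁ ≫ K.map a = k₂ ≫ K.map b := by simpa using hab
    set q' := IsFiltered.coeq a b with hq'
    set e : p ⟶ q' := a ≫ IsFiltered.coeqHom a b with he
    have heq : k₁ ≫ K.map e = k₂ ≫ K.map e :=
      calc k₁ ≫ K.map e = (k₁ ≫ K.map a) ≫ K.map (IsFiltered.coeqHom a b) := by
            rw [he, K.map_comp, Category.assoc]
        _ = (k₂ ≫ K.map b) ≫ K.map (IsFiltered.coeqHom a b) := by rw [hab']
        _ = k₂ ≫ K.map (b ≫ IsFiltered.coeqHom a b) := by rw [K.map_comp, Category.assoc]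
        _ = k₂ ≫ K.map e := by rw [he, IsFiltered.coeq_condition a b]
    set u : y ⟶ (K.obj q').right := g ≫ H₁.right ≫ (K.map e).right with hu
    have hgu : g ≫ H₁.right ≫ (K.map e).right = u := rfl
    have hgu' : g ≫ H₂.right ≫ (K.map e).right = u := by
      have hh2 := congrArg Under.Hom.right heq
      simp only [Under.comp_right, hk₁r, hk₂r] at hh2
      simp only [hu, ← Category.assoc]
      exact hh2.symm
    have hfu : f ≫ u = (K.obj q').hom := by
      have h1 : (f ≫ g) ≫ H₁.right = (K.obj p).hom := by simpa using Under.w H₁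
      have h2 : (K.obj p).hom ≫ (K.map e).right = (K.obj q').hom := by
        simpa using Under.w (K.map e)
      simp only [hu, ← Category.assoc]
      rw [h1, h2]
    haveI := (hg (Under q')).some
    have hD : IsColimit ((coyoneda.obj (op (Under.mk g))).mapCocone
        (underDiagCocone K q' u s)) :=
      isColimitOfPreserves _ (underDiagCoconeIsColimit K q' u s hs)
    set v₁ : Under.mk g ⟶ (underDiag K q' u).obj (Under.mk (𝟙 q')) :=
      Under.homMk (U := Under.mk g) (H₁.right ≫ (K.map e).right)
        (by simpa using hgu) with hv₁d
    set v₂ : Under.mk g ⟶ (underDiag K q' u).obj (Under.mk (𝟙 q')) :=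
      Under.homMk (U := Under.mk g) (H₂.right ≫ (K.map e).right)
        (by simpa using hgu') with hv₂d
    have hv₁r : v₁.right = H₁.right ≫ (K.map e).right := by rw [hv₁d]; rfl
    have hv₂r : v₂.right = H₂.right ≫ (K.map e).right := by rw [hv₂d]; rfl
    have hv : v₁ ≫ (underDiagCocone K q' u s).ι.app (Under.mk (𝟙 q')) =
        v₂ ≫ (underDiagCocone K q' u s).ι.app (Under.mk (𝟙 q')) := by
      apply Under.UnderMorphism.ext
      have hse := congrArg Under.Hom.right (s.w e)
      simp only [Under.comp_right] at hse
      have hHs := congrArg Under.Hom.right hH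
      simp only [Under.comp_right] at hHs
      show (H₁.right ≫ (K.map e).right) ≫ (s.ι.app q').right =
        (H₂.right ≫ (K.map e).right) ≫ (s.ι.app q').right
      rw [Category.assoc, Category.assoc, hse, hHs]
    obtain ⟨j', a', b', h'ab⟩ := (Types.FilteredColimit.isColimit_eq_iff _ hD
      (xi := v₁) (xj := v₂)).mp (by exact hv)
    have ha' : a'.right = j'.hom := by simpa using Under.w a'
    have hb' : b'.right = j'.hom := by simpa using Under.w b'
    have h'ab' : v₁ ≫ (underDiag K q' u).map a' = v₂ ≫ (underDiag K q' u).map b' := by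
      exact h'ab
    have hkey : H₁.right ≫ (K.map (e ≫ j'.hom)).right =
        H₂.right ≫ (K.map (e ≫ j'.hom)).right := by
      have hr := congrArg Under.Hom.right h'ab'
      change (H₁.right ≫ (K.map e).right) ≫ (K.map a'.right).right =
        (H₂.right ≫ (K.map e).right) ≫ (K.map b'.right).right at hr
      rw [ha', hb'] at hr
      simp only [K.map_comp, Under.comp_right, Category.assoc] at hr ⊢
      exact hr
    refine ⟨j'.right, IsFiltered.leftToMax i i' ≫ e ≫ j'.hom,
      IsFiltered.rightToMax i i' ≫ e ≫ j'.hom, ?_⟩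
    show h₁ ≫ K.map _ = h₂ ≫ K.map _
    apply Under.UnderMorphism.ext
    have e1 : H₁.right = h₁.right ≫ (K.map (IsFiltered.leftToMax i i')).right := by
      rw [hH₁]; simp
    have e2 : H₂.right = h₂.right ≫ (K.map (IsFiltered.rightToMax i i')).right := by
      rw [hH₂]; simp
    simp only [K.map_comp, Under.comp_right, Category.assoc]
    rw [e1, e2, Category.assoc, Category.assoc] at hkey
    simp only [K.map_comp, Under.comp_right, Category.assoc] at hkey
    simp only [he, K.map_comp, Under.comp_right, Category.assoc]
    exact hkey
end

section
/- Let k be a field, G a finite group, and k → K a k-algebra homomorphism with K ≠ 0, where K is a finitely presented k-algebra. If every element of G acts on K by k-algebra automorphisms and K admits a complete orthogonal family of idempotents {y_g}_{g∈G} permuted simply transitively by G (g·y_h = y_{gh}), then K ≅ Fun(G, K·y_e) as G-rings, where K·y_e is the direct factor cut out by y_e. -/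
/-- If a nonzero finitely presented k-algebra K carries a G-action by k-algebra
automorphisms admitting a complete orthogonal family of idempotents (y_g) with
g • y_h = y_{gh}, then K ≅ Fun(G, K·y_e) as G-rings (realizing the factor K·y_e
as K ⧸ (1 - y_e), and Fun(G,-) carrying the action (g • φ) h = φ (h * g)). -/
theorem stmt14 (G : Type) [Group G] [Fintype G] (k K : Type) [Field k] [CommRing K]
    [Algebra k K] [MulSemiringAction G K]
    (hact : ∀ (g : G) (c : k), g • algebraMap k K c = algebraMap k K c)
    (hfp : Algebra.FinitePresentation k K) (hK : Nontrivial K)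
    (y : G → K) (hidem : ∀ g, y g * y g = y g)
    (horth : ∀ g h, g ≠ h → y g * y h = 0)
    (hsum : ∑ g : G, y g = 1) (hperm : ∀ g h : G, g • y h = y (g * h)) :
    ∃ e : K ≃+* (G → K ⧸ Ideal.span {1 - y 1}),
      ∀ (g : G) (a : K), e (g • a) = fun h => e a (h * g) := by
  set I : Ideal K := Ideal.span {1 - y 1} with hI
  have hmem : ∀ x : K, x ∈ I ↔ x * y 1 = 0 := by
    intro x
    constructor
    · intro hx
      rw [hI, Ideal.mem_span_singleton] at hx
      obtain ⟨c, rfl⟩ := hx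
      ring_nf
      rw [sq, hidem]
      ring
    · intro hx
      rw [hI, Ideal.mem_span_singleton]
      exact ⟨x, by ring_nf; rw [mul_comm (y 1) x, hx]; ring⟩
  let π := Ideal.Quotient.mk I
  let f : K →+* (G → K ⧸ I) :=
    Pi.ringHom (fun h => π.comp (MulSemiringAction.toRingHom G K h))
  have hf : ∀ (a : K) (h : G), f a h = π (h • a) := fun _ _ => rfl
  have hπy1 : π (y 1) = 1 := by
    have : (1 : K) - y 1 ∈ I := Ideal.subset_span rfl
    have := (Ideal.Quotient.eq_zero_iff_mem).2 this
    rw [map_sub, map_one, sub_eq_zero] at this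
    exact this.symm
  have hinj : Function.Injective f := by
    intro a b hab
    have key : ∀ g : G, a * y g = b * y g := by
      intro g
      have h1 : π (g⁻¹ • a) = π (g⁻¹ • b) := congrFun hab g⁻¹
      have h2 : (g⁻¹ • a - g⁻¹ • b) * y 1 = 0 :=
        (hmem _).1 (Ideal.Quotient.eq.mp h1)
      have h3 : g • ((g⁻¹ • a - g⁻¹ • b) * y 1) = 0 := by rw [h2, smul_zero]
      simp only [smul_mul', smul_sub, smul_smul, mul_inv_cancel, one_smul,
        hperm, mul_one] at h3
      rw [sub_mul, sub_eq_zero] at h3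
      exact h3
    have : a * 1 = b * 1 := by
      rw [← hsum, Finset.mul_sum, Finset.mul_sum]
      exact Finset.sum_congr rfl fun g _ => key g
    simpa using this
  have hsurj : Function.Surjective f := by
    intro φ
    choose a ha using fun h => Ideal.Quotient.mk_surjective (I := I) (φ h)
    refine ⟨∑ h : G, h⁻¹ • (a h * y 1), ?_⟩
    funext g
    rw [hf, Finset.smul_sum]
    have : ∀ h : G, g • h⁻¹ • (a h * y 1) = ((g * h⁻¹) • a h) * y (g * h⁻¹) := by
      intro h
      rw [smul_smul, smul_mul', hperm, mul_one]
    simp_rw [this, map_sum]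
    rw [Finset.sum_eq_single g]
    · rw [mul_inv_cancel]
      rw [one_smul, map_mul, hπy1, mul_one, ha]
    · intro h _ hne
      have hne1 : g * h⁻¹ ≠ 1 := by
        intro hc
        exact hne (by rw [← one_mul h, ← hc]; group)
      apply Ideal.Quotient.eq_zero_iff_mem.2
      rw [hmem, mul_assoc, horth _ _ hne1, mul_zero]
    · intro hg; exact absurd (Finset.mem_univ g) hg
  refine ⟨RingEquiv.ofBijective f ⟨hinj, hsurj⟩, fun g a => ?_⟩
  funext h
  show f (g • a) h = f a (h * g)
  rw [hf, hf, mul_smul]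
end

section
/- Let G be a finite group and S a nonzero commutative ring on which G acts by ring automorphisms. If S admits idempotents {y_g}_{g∈G} with y_g² = y_g, y_g y_h = 0 for g ≠ h, ∑_{g∈G} y_g = 1, and g·y_h = y_{gh} for all g, h ∈ G, then the fixed ring S^G is isomorphic to the direct factor S·y_e via the map sending s ∈ S^G to s·y_e, with inverse given by t ↦ ∑_{g∈G} g·t for t ∈ S·y_e. -/
/-- If a finite group G acts on a nonzero commutative ring S admitting a complete
orthogonal family of idempotents (y_g) with g • y_h = y_{gh}, then s ↦ s·y_e is a
bijection from the fixed ring S^G to the direct factor S·y_e, with inverse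
t ↦ ∑_g g•t. -/
theorem stmt15 (G S : Type) [Group G] [Fintype G] [CommRing S] [MulSemiringAction G S]
    [Nontrivial S] (y : G → S) (hidem : ∀ g, y g * y g = y g)
    (horth : ∀ g h, g ≠ h → y g * y h = 0)
    (hsum : ∑ g : G, y g = 1) (hperm : ∀ g h : G, g • y h = y (g * h)) :
    Set.BijOn (fun s => s * y 1) {s : S | ∀ g : G, g • s = s} {t : S | t * y 1 = t} ∧
    Set.InvOn (fun t => ∑ g : G, g • t) (fun s => s * y 1)
      {s : S | ∀ g : G, g • s = s} {t : S | t * y 1 = t} := by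
  have hmapsto : Set.MapsTo (fun s => s * y 1) {s : S | ∀ g : G, g • s = s}
      {t : S | t * y 1 = t} := by
    intro s _
    simp only [Set.mem_setOf_eq]
    rw [mul_assoc, hidem]
  have hmapsto' : Set.MapsTo (fun t => ∑ g : G, g • t) {t : S | t * y 1 = t}
      {s : S | ∀ g : G, g • s = s} := by
    intro t _
    intro h
    simp only [Set.mem_setOf_eq]
    rw [Finset.smul_sum]
    refine Fintype.sum_equiv (Equiv.mulLeft h) _ _ (fun g => ?_)
    simp [smul_smul]
  have hinv : Set.InvOn (fun t => ∑ g : G, g • t) (fun s => s * y 1)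
      {s : S | ∀ g : G, g • s = s} {t : S | t * y 1 = t} := by
    constructor
    · intro s hs
      simp only [Set.mem_setOf_eq] at hs
      simp only [smul_mul', hs, hperm, mul_one]
      rw [← Finset.mul_sum, hsum, mul_one]
    · intro t ht
      classical
      simp only [Set.mem_setOf_eq] at ht
      have key : ∀ g : G, g • t * y 1 = if g = 1 then t else 0 := by
        intro g
        have : g • t = g • t * y g := by
          conv_lhs => rw [← ht, smul_mul', hperm, mul_one]
        rw [this]
        by_cases hg : g = 1
        · subst hg; rw [if_pos rfl, one_smul, mul_assoc, hidem, ht]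
        · rw [mul_assoc, horth g 1 hg, mul_zero, if_neg hg]
      simp only [Finset.sum_mul, key, Finset.sum_ite_eq' Finset.univ (1 : G),
        Finset.mem_univ, if_true]
  exact ⟨hinv.bijOn hmapsto hmapsto', hinv⟩
end

section
/- Let G be a nontrivial finite group. There exists a function f : G → ℂ with f(g) ≠ 0 for all g ∈ G and ∑_{g∈G} f(g) = 0. Consequently, the ℂ-algebra Y = Sym_ℂ(ℂ[G]/ℂ)[g⁻¹ : g ∈ G], obtained from the symmetric algebra on the quotient of the regular representation by the trivial subrepresentation spanned by ∑_{g∈G} g, after inverting the images of the basis elements g, is a nonzero ring. -/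
open MvPolynomial

/-- For a nontrivial finite group G there is a nowhere-zero function f : G → ℂ with
total sum zero; consequently the ℂ-algebra Y = Sym_ℂ(ℂ[G]/ℂ)[g⁻¹ : g ∈ G]
(realized as the localization of MvPolynomial G ℂ ⧸ (∑_g X_g) at the images of
the X_g) is nonzero. -/
theorem stmt17 (G : Type) [Group G] [Fintype G] [Nontrivial G] :
    (∃ f : G → ℂ, (∀ g : G, f g ≠ 0) ∧ ∑ g : G, f g = 0) ∧
    Nontrivial (Localization (Submonoid.closure (Set.range fun g : G =>
      Ideal.Quotient.mk (Ideal.span {∑ g' : G, (X g' : MvPolynomial G ℂ)}) (X g)))) := by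
  classical
  have hcard : 2 ≤ Fintype.card G := Fintype.one_lt_card
  set f : G → ℂ := fun g => if g = 1 then 1 - (Fintype.card G : ℂ) else 1 with hf
  have hne : ∀ g : G, f g ≠ 0 := by
    intro g
    by_cases h : g = 1
    · simp only [hf, h, if_pos rfl]
      intro hz
      have : (Fintype.card G : ℂ) = 1 := by linear_combination -hz
      have : (Fintype.card G : ℂ) ≠ 1 := by
        exact_mod_cast (by omega : Fintype.card G ≠ 1)
      exact this ‹_›
    · simp [hf, h]
  have hsum : ∑ g : G, f g = 0 := by
    have key : ∀ g : G, f g = 1 - (if g = 1 then (Fintype.card G : ℂ) else 0) := by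
      intro g; by_cases h : g = 1 <;> simp [hf, h]
    rw [Finset.sum_congr rfl fun g _ => key g, Finset.sum_sub_distrib,
      Finset.sum_ite_eq' Finset.univ (1 : G) (fun _ => (Fintype.card G : ℂ))]
    simp [Finset.card_univ]
  refine ⟨⟨f, hne, hsum⟩, ?_⟩
  set I : Ideal (MvPolynomial G ℂ) := Ideal.span {∑ g' : G, (X g' : MvPolynomial G ℂ)}
  have hker : I ≤ RingHom.ker (aeval f : MvPolynomial G ℂ →ₐ[ℂ] ℂ).toRingHom := by
    rw [Ideal.span_le, Set.singleton_subset_iff]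
    simp [RingHom.mem_ker, hsum]
  set φ : MvPolynomial G ℂ ⧸ I →+* ℂ :=
    Ideal.Quotient.lift I (aeval f : MvPolynomial G ℂ →ₐ[ℂ] ℂ).toRingHom hker
  set S := Submonoid.closure (Set.range fun g : G => Ideal.Quotient.mk I (X g))
  have hunit : ∀ s : S, IsUnit (φ s) := by
    rintro ⟨s, hs⟩
    refine Submonoid.closure_induction ?_ ?_ ?_ hs
    · rintro x ⟨g, rfl⟩
      simp only [φ, Ideal.Quotient.lift_mk, AlgHom.toRingHom_eq_coe, RingHom.coe_coe, aeval_X]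
      exact (hne g).isUnit
    · simp
    · intro a b _ _ ha hb
      rw [map_mul]; exact ha.mul hb
  have ψ : Localization S →+* ℂ := IsLocalization.lift (M := S) (S := Localization S) hunit
  exact ψ.domain_nontrivial
end
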